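/- Define E = {u ∈ L¹(ℝ) | ∫_ℝ u(x) dx = 0} and J : E → L^∞(ℝ) by (Ju)(x) = ∫_{-∞}^x u(y) dy. Then J is a bounded, injective, antisymmetric linear map but its range is not dense in L^∞(ℝ): in fact ‖Ju - 1‖_∞ ≥ 1 for every u ∈ E. -/

import Mathlib

open MeasureTheory

open Set Filter in
/-- Auxiliary: the diagonal of `ℝ × ℝ` is null for the product measure. -/
lemma diag_null : (volume.prod volume) {p : ℝ × ℝ | p.1 = p.2} = 0 := by
  have hD : MeasurableSet {p : ℝ × ℝ | p.1 = p.2} :=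
    measurableSet_eq_fun measurable_fst measurable_snd
  rw [Measure.prod_apply hD]
  have : ∀ x : ℝ, volume (Prod.mk x ⁻¹' {p : ℝ × ℝ | p.1 = p.2}) = 0 := by
    intro x
    have : Prod.mk x ⁻¹' {p : ℝ × ℝ | p.1 = p.2} = {x} := by
      ext y; simp [eq_comm]
    rw [this]
    exact Real.volume_singleton
  simp [this]

open Set Filter Topology in
/-- Auxiliary: the truncated integrals tend to zero at `-∞` in the sense needed below. -/
lemma tail_small (u : ℝ → ℝ) (hu : Integrable u) {δ : ℝ} (hδ : 0 < δ) :
    ∃ N : ℝ, ∀ x ≤ N, |∫ y in Set.Iic x, u y| < δ := by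
  have hL : Tendsto (fun n : ℕ => ∫ y in Iic (-(n : ℝ)), |u y|) atTop
      (𝓝 (∫ y in ⋂ n : ℕ, Iic (-(n : ℝ)), |u y|)) := by
    apply tendsto_setIntegral_of_antitone (fun n => measurableSet_Iic)
    · intro m n hmn
      exact Iic_subset_Iic.2 (by exact_mod_cast neg_le_neg (Nat.cast_le.2 hmn))
    · exact ⟨0, hu.abs.integrableOn⟩
  have hempty : (⋂ n : ℕ, Iic (-(n : ℝ))) = ∅ := by
    apply eq_empty_of_forall_notMem
    intro x hx
    simp only [mem_iInter, mem_Iic] at hx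
    rcases exists_nat_gt (-x) with ⟨n, hn⟩
    have := hx n
    linarith
  rw [hempty] at hL
  simp only [Measure.restrict_empty, integral_zero_measure] at hL
  have := (tendsto_order.1 hL).2 δ hδ
  rcases this.exists with ⟨n, hn⟩
  refine ⟨-(n : ℝ), fun x hx => ?_⟩
  have h1 : |∫ y in Iic x, u y| ≤ ∫ y in Iic x, |u y| := by
    simpa [Real.norm_eq_abs] using norm_integral_le_integral_norm (μ := volume.restrict (Iic x)) u
  have h2 : ∫ y in Iic x, |u y| ≤ ∫ y in Iic (-(n : ℝ)), |u y| := by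
    apply setIntegral_mono_set hu.abs.integrableOn
    · exact ae_of_all _ fun y => abs_nonneg _
    · exact HasSubset.Subset.eventuallyLE (Iic_subset_Iic.2 hx)
  linarith

/-- On `E = {u ∈ L¹(ℝ) : ∫ u = 0}`, the map `(Ju)(x) = ∫_{-∞}^x u(y) dy` is bounded,
injective and antisymmetric, but its range is not dense in `L^∞(ℝ)`: indeed
`‖Ju - 1‖_∞ ≥ 1` for every `u ∈ E`. -/
theorem stmt5 :
    -- boundedness: ‖Ju‖_∞ ≤ ‖u‖_{L¹}
    (∀ u : ℝ → ℝ, Integrable u →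
      ∀ x : ℝ, |∫ y in Set.Iic x, u y| ≤ ∫ y, |u y|) ∧
    -- injectivity
    (∀ u : ℝ → ℝ, Integrable u → (∫ y, u y) = 0 →
      (∀ x : ℝ, (∫ y in Set.Iic x, u y) = 0) → u =ᵐ[volume] 0) ∧
    -- antisymmetry: ∫ (Ju) v = - ∫ (Jv) u
    (∀ u v : ℝ → ℝ, Integrable u → Integrable v →
      (∫ y, u y) = 0 → (∫ y, v y) = 0 →
      (∫ x, (∫ y in Set.Iic x, u y) * v x) = -∫ x, (∫ y in Set.Iic x, v y) * u x) ∧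
    -- the range of J is not dense: ‖Ju - 1‖_∞ ≥ 1
    (∀ u : ℝ → ℝ, Integrable u → (∫ y, u y) = 0 →
      1 ≤ eLpNorm (fun x : ℝ => (∫ y in Set.Iic x, u y) - 1) ⊤ volume) := by
  refine ⟨?_, ?_, ?_, ?_⟩
  · -- boundedness
    intro u hu x
    have h1 : |∫ y in Set.Iic x, u y| ≤ ∫ y in Set.Iic x, |u y| := by
      simpa [Real.norm_eq_abs] using
        norm_integral_le_integral_norm (μ := volume.restrict (Set.Iic x)) u
    have h2 : ∫ y in Set.Iic x, |u y| ≤ ∫ y, |u y| :=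
      setIntegral_le_integral hu.abs (ae_of_all _ fun y => abs_nonneg _)
    linarith
  · -- injectivity
    intro u hu _ h
    set μ₁ := volume.withDensity fun x => ENNReal.ofReal (u x) with hμ₁
    set μ₂ := volume.withDensity fun x => ENNReal.ofReal (-u x) with hμ₂
    have hfin : ∀ s : Set ℝ, (∫⁻ y in s, ENNReal.ofReal (u y)) ≠ ⊤ ∧
        (∫⁻ y in s, ENNReal.ofReal (-u y)) ≠ ⊤ := by
      intro s
      constructor
      · refine ne_top_of_le_ne_top hu.2.ne ?_
        refine le_trans (lintegral_mono fun y => ?_) (setLIntegral_le_lintegral _ _)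
        exact Real.ofReal_le_enorm _
      · refine ne_top_of_le_ne_top hu.2.ne ?_
        refine le_trans (lintegral_mono fun y => ?_) (setLIntegral_le_lintegral _ _)
        simpa using Real.ofReal_le_enorm (-u y)
    have hfin₁ : IsFiniteMeasure μ₁ := by
      constructor
      rw [hμ₁, withDensity_apply _ MeasurableSet.univ]
      exact lt_top_iff_ne_top.2 (hfin Set.univ).1
    have heq : μ₁ = μ₂ := by
      apply Measure.ext_of_Iic
      intro a
      rw [hμ₁, hμ₂, withDensity_apply _ measurableSet_Iic,
        withDensity_apply _ measurableSet_Iic]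
      have h0 := h a
      rw [integral_eq_lintegral_pos_part_sub_lintegral_neg_part hu.integrableOn] at h0
      have hfa := hfin (Set.Iic a)
      have := sub_eq_zero.1 h0
      exact (ENNReal.toReal_eq_toReal_iff' hfa.1 hfa.2).1 this
    have hae : (fun x => ENNReal.ofReal (u x)) =ᵐ[volume] fun x => ENNReal.ofReal (-u x) := by
      rw [← withDensity_eq_iff_of_sigmaFinite]
      · exact heq
      · exact ENNReal.measurable_ofReal.comp_aemeasurable hu.1.aemeasurable
      · exact ENNReal.measurable_ofReal.comp_aemeasurable hu.1.aemeasurable.neg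
    filter_upwards [hae] with x hx
    simp only [Pi.zero_apply]
    by_contra hne
    rcases lt_or_gt_of_ne hne with hlt | hgt
    · have h1 : ENNReal.ofReal (u x) = 0 := by rw [ENNReal.ofReal_eq_zero]; linarith
      rw [h1] at hx
      have h2 := ENNReal.ofReal_eq_zero.1 hx.symm
      linarith
    · have h1 : ENNReal.ofReal (-u x) = 0 := by rw [ENNReal.ofReal_eq_zero]; linarith
      rw [h1] at hx
      have h2 := ENNReal.ofReal_eq_zero.1 hx
      linarith
  · -- antisymmetry
    intro u v hu hv hu0 hv0
    set S : Set (ℝ × ℝ) := {p | p.2 ≤ p.1} with hS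
    set T : Set (ℝ × ℝ) := {p | p.1 ≤ p.2} with hT
    have hSm : MeasurableSet S := measurableSet_le measurable_snd measurable_fst
    have hTm : MeasurableSet T := measurableSet_le measurable_fst measurable_snd
    set h : ℝ × ℝ → ℝ := fun p => u p.2 * v p.1 with hh
    set h' : ℝ × ℝ → ℝ := fun p => v p.2 * u p.1 with hh'
    have hint : Integrable h (volume.prod volume) := by
      have := hv.mul_prod hu
      simpa [hh, mul_comm] using this
    have hint' : Integrable h' (volume.prod volume) := by
      have := hu.mul_prod hv
      simpa [hh', mul_comm] using this
    have key : ∀ (a b : ℝ → ℝ), Integrable a → Integrable b →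
        (∫ x, (∫ y in Set.Iic x, a y) * b x) =
          ∫ p : ℝ × ℝ, S.indicator (fun p => a p.2 * b p.1) p ∂(volume.prod volume) := by
      intro a b ha hb
      have hintab : Integrable (fun p : ℝ × ℝ => a p.2 * b p.1) (volume.prod volume) := by
        simpa [mul_comm] using hb.mul_prod ha
      have step1 : ∀ x : ℝ, (∫ y in Set.Iic x, a y) * b x =
          ∫ y, S.indicator (fun p => a p.2 * b p.1) (x, y) := by
        intro x
        have : ∀ y : ℝ, S.indicator (fun p : ℝ × ℝ => a p.2 * b p.1) (x, y) =
            (Set.Iic x).indicator (fun y => a y * b x) y := by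
          intro y
          simp only [Set.indicator_apply, hS, Set.mem_setOf_eq, Set.mem_Iic]
        simp_rw [this]
        rw [integral_indicator measurableSet_Iic, ← integral_mul_const]
      simp_rw [step1]
      exact integral_integral ((hintab.indicator (by exact hSm)))
    have A := key u v hu hv
    have B := key v u hv hu
    have hBswap : (∫ p : ℝ × ℝ, S.indicator (fun p => v p.2 * u p.1) p ∂(volume.prod volume)) =
        ∫ p : ℝ × ℝ, T.indicator h p ∂(volume.prod volume) := by
      rw [← integral_prod_swap (S.indicator (fun p => v p.2 * u p.1))]
      congr 1
      funext p
      by_cases hp : p.1 ≤ p.2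
      · simp [Set.indicator_apply, hS, hT, hh, hp, Prod.swap, mul_comm]
      · simp [Set.indicator_apply, hS, hT, hh, hp, Prod.swap, mul_comm]
    have hsum : (∫ p : ℝ × ℝ, S.indicator h p ∂(volume.prod volume)) +
        (∫ p : ℝ × ℝ, T.indicator h p ∂(volume.prod volume)) = 0 := by
      rw [← integral_add (hint.indicator hSm) (hint.indicator hTm)]
      have hae : (fun p => S.indicator h p + T.indicator h p) =ᵐ[volume.prod volume] h := by
        have hd : ∀ᵐ p : ℝ × ℝ ∂(volume.prod volume), p.1 ≠ p.2 := by
          have := diag_null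
          rw [← compl_compl {p : ℝ × ℝ | p.1 = p.2}] at this
          filter_upwards [measure_eq_zero_iff_ae_notMem.1 diag_null] with p hp
          simpa using hp
        filter_upwards [hd] with p hp
        rcases lt_or_gt_of_ne hp with hlt | hgt
        · simp [Set.indicator_apply, hS, hT, hlt.le, not_le.2 hlt]
        · simp [Set.indicator_apply, hS, hT, hgt.le, not_le.2 hgt]
      rw [integral_congr_ae hae]
      have : (∫ p : ℝ × ℝ, h p ∂(volume.prod volume)) = (∫ y, v y) * (∫ y, u y) := by
        have := integral_prod_mul (μ := (volume : Measure ℝ)) (ν := (volume : Measure ℝ)) v u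
        simpa [hh, mul_comm] using this
      rw [this, hu0, hv0, mul_zero]
    rw [A, B, hBswap]
    linarith [hsum]
  · -- non-density
    intro u hu hu0
    by_contra hcon
    push_neg at hcon
    set f : ℝ → ℝ := fun x => (∫ y in Set.Iic x, u y) - 1 with hf
    set c : ℝ := (eLpNorm f ⊤ volume).toReal with hc
    have hlt_top : eLpNorm f ⊤ volume < ⊤ := hcon.trans (by norm_num)
    have hc1 : c < 1 := by
      rw [hc]
      have := ENNReal.toReal_lt_toReal hlt_top.ne (by norm_num : (1 : ENNReal) ≠ ⊤)
      simpa using this.2 hcon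
    have hae : ∀ᵐ x : ℝ, |f x| ≤ c := by
      have h1 : ∀ᵐ x : ℝ, (‖f x‖₊ : ENNReal) ≤ eLpNorm f ⊤ volume := by
        rw [eLpNorm_exponent_top]
        exact ae_le_eLpNormEssSup
      filter_upwards [h1] with x hx
      have : ((‖f x‖₊ : ENNReal)).toReal ≤ (eLpNorm f ⊤ volume).toReal :=
        ENNReal.toReal_mono hlt_top.ne hx
      simpa [Real.norm_eq_abs, hc] using this
    set δ : ℝ := (1 - c) / 2 with hδdef
    have hδ : 0 < δ := by rw [hδdef]; linarith
    rcases tail_small u hu hδ with ⟨N, hN⟩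
    have hres : (volume.restrict (Set.Iic N)) ≠ 0 := by
      rw [Ne, Measure.restrict_eq_zero, Real.volume_Iic]
      exact ENNReal.top_ne_zero
    have : ∀ᵐ x ∂(volume.restrict (Set.Iic N)), |f x| ≤ c ∧ x ∈ Set.Iic N :=
      (ae_restrict_of_ae hae).and (ae_restrict_mem measurableSet_Iic)
    have hne : (ae (volume.restrict (Set.Iic N))).NeBot := ae_neBot.2 hres
    rcases this.exists with ⟨x, hx1, hx2⟩
    have hx3 := hN x hx2
    have : 1 - δ ≤ |f x| := by
      rw [hf]
      have : |(∫ y in Set.Iic x, u y) - 1| ≥ 1 - |∫ y in Set.Iic x, u y| := by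
        have := abs_sub_abs_le_abs_sub (1 : ℝ) (∫ y in Set.Iic x, u y)
        have h2 := abs_sub_comm (1 : ℝ) (∫ y in Set.Iic x, u y)
        simp only [abs_one] at this
        linarith
      linarith
    rw [hδdef] at this
    linarith
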